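/- For every m ≥ 0, let φ_{m+1}(u) = -Σ_{j=0}^{m} (u-1)^j·(1-zt)^j·u^{m-j}·Π_{i=j+1}^{m} (1 - (1-t)^i), a polynomial of degree at most m in u with coefficients in ℚ⟦t,z⟧. Then γ_1·φ_{m+1}(u) = (u-1)^{m+1}·(1-zt)^{m+1} + u·δ_1^{m}·φ_{m+1}(u·δ_1^{-1}), where φ_{m+1}(u·δ_1^{-1}) denotes substitution of u·δ_1^{-1} for u. -/
import Mathlib


/-!
STATEMENT 11: For every m ≥ 0, with
φ_{m+1}(w) = -Σ_{j=0}^{m} (w-1)^j·(1-zt)^j·w^{m-j}·Π_{i=j+1}^{m} (1 - (1-t)^i)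
(a polynomial of degree at most m in its argument, with coefficients in ℚ⟦t,z⟧),
one has γ₁·φ_{m+1}(u) = (u-1)^{m+1}·(1-zt)^{m+1} + u·δ₁^{m}·φ_{m+1}(u·δ₁⁻¹) in ℚ⟦t,u,z⟧.
-/

open MvPowerSeries

/-- The variable `t` in `ℚ⟦t,u,z⟧`. -/
noncomputable def T : MvPowerSeries (Fin 3) ℚ := X 0
/-- The variable `u` in `ℚ⟦t,u,z⟧`. -/
noncomputable def U : MvPowerSeries (Fin 3) ℚ := X 1
/-- The variable `z` in `ℚ⟦t,u,z⟧`. -/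
noncomputable def Z : MvPowerSeries (Fin 3) ℚ := X 2

/-- `δ_1 = u - (1-t)(u-1) = 1 + t(u-1)`. -/
noncomputable def delta1 : MvPowerSeries (Fin 3) ℚ := U - (1 - T) * (U - 1)

/-- `γ_1 = u - (1-zt)(u-1) = 1 + zt(u-1)`. -/
noncomputable def gamma1 : MvPowerSeries (Fin 3) ℚ := U - (1 - Z * T) * (U - 1)

/-- The polynomial expression
`φ_{m+1}(w) = -Σ_{j=0}^{m} (w-1)^j (1-zt)^j w^{m-j} Π_{i=j+1}^{m} (1-(1-t)^i)`,
evaluated at the argument `w`; substitution for `u` is evaluation of this expression. -/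
noncomputable def phi (m : ℕ) (w : MvPowerSeries (Fin 3) ℚ) : MvPowerSeries (Fin 3) ℚ :=
  -(∑ j ∈ Finset.range (m + 1),
    (w - 1) ^ j * (1 - Z * T) ^ j * w ^ (m - j) *
      ∏ i ∈ Finset.Ico (j + 1) (m + 1), (1 - (1 - T) ^ i))

/-- abbreviation `A = 1 - zt` -/
noncomputable def AA : MvPowerSeries (Fin 3) ℚ := 1 - Z * T
/-- abbreviation `B = 1 - t` -/
noncomputable def BB : MvPowerSeries (Fin 3) ℚ := 1 - T
/-- abbreviation for the tail product -/
noncomputable def PP (m j : ℕ) : MvPowerSeries (Fin 3) ℚ :=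
  ∏ i ∈ Finset.Ico (j + 1) (m + 1), (1 - BB ^ i)
/-- the `j`-th summand of `-φ_{m+1}(u)` -/
noncomputable def tt1 (m j : ℕ) : MvPowerSeries (Fin 3) ℚ :=
  (U - 1) ^ j * AA ^ j * U ^ (m - j) * PP m j
/-- the `j`-th summand of the transformed sum -/
noncomputable def tt2 (m j : ℕ) : MvPowerSeries (Fin 3) ℚ :=
  (U - 1) ^ j * BB ^ j * AA ^ j * U ^ (m + 1 - j) * PP m j

lemma delta1_mul_inv : delta1 * delta1⁻¹ = 1 := by
  apply MvPowerSeries.mul_inv_cancel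
  simp [delta1, T, U]

lemma phi_eq (m : ℕ) : phi m U = -(∑ j ∈ Finset.range (m + 1), tt1 m j) := by
  simp [phi, tt1, AA, BB, PP]

lemma step1 (m : ℕ) :
    U * delta1 ^ m * phi m (U * delta1⁻¹) =
      -(∑ j ∈ Finset.range (m + 1), tt2 m j) := by
  rw [phi, mul_neg, neg_inj, Finset.mul_sum]
  refine Finset.sum_congr rfl fun j hj => ?_
  have hjm : j ≤ m := Nat.lt_succ_iff.mp (Finset.mem_range.mp hj)
  have h1 : U * delta1⁻¹ - 1 = BB * (U - 1) * delta1⁻¹ := by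
    have : U - delta1 = BB * (U - 1) := by rw [delta1, BB]; ring
    rw [← this, sub_mul, delta1_mul_inv]
  have hδm : delta1 ^ m = delta1 ^ (m - j) * delta1 ^ j := by
    rw [← pow_add, Nat.sub_add_cancel hjm]
  have h2 : delta1 ^ j * delta1⁻¹ ^ j = 1 := by
    rw [← mul_pow, delta1_mul_inv, one_pow]
  have h3 : delta1 ^ (m - j) * delta1⁻¹ ^ (m - j) = 1 := by
    rw [← mul_pow, delta1_mul_inv, one_pow]
  have h4 : m + 1 - j = (m - j) + 1 := by omega
  rw [h1, hδm, mul_pow (BB * (U - 1)) delta1⁻¹, mul_pow BB (U - 1), mul_pow U delta1⁻¹, tt2, h4, PP, AA]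
  simp only [BB]
  linear_combination
    (((U - 1) ^ j * (1 - T) ^ j * (1 - Z * T) ^ j * U ^ (m - j + 1) *
        ∏ i ∈ Finset.Ico (j + 1) (m + 1), (1 - (1 - T) ^ i)) *
      (delta1 ^ (m - j) * delta1⁻¹ ^ (m - j))) * h2 +
    ((U - 1) ^ j * (1 - T) ^ j * (1 - Z * T) ^ j * U ^ (m - j + 1) *
        ∏ i ∈ Finset.Ico (j + 1) (m + 1), (1 - (1 - T) ^ i)) * h3

lemma key (m : ℕ) :
    AA * (U - 1) * ∑ j ∈ Finset.range (m + 1), tt1 m j =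
      (U - 1) ^ (m + 1) * AA ^ (m + 1) +
        (U * ∑ j ∈ Finset.range (m + 1), tt1 m j -
          ∑ j ∈ Finset.range (m + 1), tt2 m j) := by
  have e2 : U * ∑ j ∈ Finset.range (m + 1), tt1 m j -
      ∑ j ∈ Finset.range (m + 1), tt2 m j =
      ∑ j ∈ Finset.range (m + 1), (U * tt1 m j - tt2 m j) := by
    rw [Finset.sum_sub_distrib, Finset.mul_sum]
  rw [e2, Finset.mul_sum, Finset.sum_range_succ, Finset.sum_range_succ']
  have hPm : PP m m = 1 := by simp [PP]
  have hlast : AA * (U - 1) * tt1 m m = (U - 1) ^ (m + 1) * AA ^ (m + 1) := by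
    rw [tt1, hPm, Nat.sub_self]; ring
  have hzero : U * tt1 m 0 - tt2 m 0 = 0 := by
    rw [tt1, tt2]
    simp only [pow_zero, one_mul, Nat.sub_zero]
    rw [pow_succ]; ring
  rw [hlast, hzero, add_zero]
  have hterm : ∀ j ∈ Finset.range m,
      AA * (U - 1) * tt1 m j = U * tt1 m (j + 1) - tt2 m (j + 1) := by
    intro j hj
    have hjm : j < m := Finset.mem_range.mp hj
    have hP : PP m j = (1 - BB ^ (j + 1)) * PP m (j + 1) := by
      rw [PP, PP, Finset.prod_eq_prod_Ico_succ_bot (by omega)]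
    have h5 : m - j = (m - (j + 1)) + 1 := by omega
    have h6 : m + 1 - (j + 1) = (m - (j + 1)) + 1 := by omega
    rw [tt1, tt1, tt2, hP, h5, h6, pow_succ (U - 1) j, pow_succ AA j,
      pow_succ U (m - (j + 1))]
    ring
  rw [Finset.sum_congr rfl hterm]
  ring

theorem phi_recursion (m : ℕ) :
    gamma1 * phi m U =
      (U - 1) ^ (m + 1) * (1 - Z * T) ^ (m + 1) + U * delta1 ^ m * phi m (U * delta1⁻¹) := by
  rw [step1, phi_eq, gamma1, show (1 : MvPowerSeries (Fin 3) ℚ) - Z * T = AA from rfl]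
  linear_combination key m
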